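/- Fermionic $(\mathfrak{gl}_M,\mathfrak{gl}_N)$-duality with regular singularities: in the Grassmann algebra generated by odd elements $\psi^a_i, \pi^a_i$ ($1\le a\le M$, $1\le i\le N$), for distinct $z_1,\dots,z_N$ and distinct $\lambda_1,\dots,\lambda_M$, the following identity holds: $\det\Big((\lambda - \lambda_a)\delta_{ab} - \sum_{i=1}^N \frac{\pi^a_i\psi^b_i}{z-z_i}\Big)_{a,b=1}^M \cdot \det\Big((z - z_i)\delta_{ij} - \sum_{a=1}^M \frac{\psi^a_i\pi^a_j}{\lambda - \lambda_a}\Big)_{i,j=1}^N = \prod_{i=1}^N (z - z_i)\cdot\prod_{a=1}^M (\lambda - \lambda_a)$, as rational functions of $z$ and $\lambda$ (equivalently, as an identity in the Grassmann algebra after multiplying out at generic $z, \lambda$). -/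

import Mathlib

set_option synthInstance.maxHeartbeats 1000000
set_option maxHeartbeats 2000000
/-- Column-ordered determinant (the entries appearing below are even, hence commute). -/
def ndet {A : Type*} [Ring A] {n : ℕ} (M : Matrix (Fin n) (Fin n) A) : A :=
  ∑ σ : Equiv.Perm (Fin n), ((Equiv.Perm.sign σ : ℤ) • (List.ofFn fun j => M (σ j) j).prod)

/-- The field of rational functions `ℂ(z, λ)`: `X 0 = z`, `X 1 = λ`. -/
abbrev K15 : Type := FractionRing (MvPolynomial (Fin 2) ℂ)

noncomputable def z15 : K15 := algebraMap (MvPolynomial (Fin 2) ℂ) K15 (MvPolynomial.X 0)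
noncomputable def l15 : K15 := algebraMap (MvPolynomial (Fin 2) ℂ) K15 (MvPolynomial.X 1)
noncomputable def c15 (w : ℂ) : K15 :=
  algebraMap (MvPolynomial (Fin 2) ℂ) K15 (MvPolynomial.C w)

/-- The Grassmann algebra over `ℂ(z, λ)` on odd generators `ψ^a_i, π^a_i`. -/
abbrev Gr (M N : ℕ) : Type := ExteriorAlgebra K15 ((Bool × Fin M × Fin N) →₀ K15)

/-- The odd generator `ψ^a_i`. -/
noncomputable def ψg (M N : ℕ) (a : Fin M) (i : Fin N) : Gr M N :=
  ExteriorAlgebra.ι K15 (Finsupp.single (false, a, i) 1)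

/-- The odd generator `π^a_i`. -/
noncomputable def πg (M N : ℕ) (a : Fin M) (i : Fin N) : Gr M N :=
  ExteriorAlgebra.ι K15 (Finsupp.single (true, a, i) 1)

section OddFam
variable {K A : Type*} [CommRing K] [Ring A] [Algebra K A]

instance centerCommRingFix : CommRing (Subalgebra.center K A) :=
  { (inferInstance : Ring (Subalgebra.center K A)) with
    mul_comm := fun a b => mul_comm (G := Subalgebra.center K A) a b }

open Matrix in
lemma det_peel {R : Type*} [CommRing R] {n : ℕ} (M : Matrix (Fin (n+1)) (Fin (n+1)) R)
    (a : R) (ha : M (Fin.last n) (Fin.last n) * a = 1) :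
    M.det = M (Fin.last n) (Fin.last n) *
      (Matrix.of fun i j : Fin n => M i.castSucc j.castSucc -
        M i.castSucc (Fin.last n) * a * M (Fin.last n) j.castSucc).det := by
  have hone : ∀ j : Fin 1, Fin.natAdd n j = Fin.last n := by
    intro j; have : j = 0 := Subsingleton.elim _ _
    subst this; ext; simp [Fin.natAdd, Fin.last]
  set D : Matrix (Fin 1) (Fin 1) R := Matrix.of (fun _ _ => M (Fin.last n) (Fin.last n)) with hD
  letI : Invertible D := ⟨Matrix.of (fun _ _ => a), by
      ext i j
      simp [hD, Matrix.mul_apply, Fin.sum_univ_one, Matrix.one_apply, Subsingleton.elim i j,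
        mul_comm a _, ha], by
      ext i j
      simp [hD, Matrix.mul_apply, Fin.sum_univ_one, Matrix.one_apply, Subsingleton.elim i j, ha]⟩
  have hsub : M.submatrix (finSumFinEquiv (m := n) (n := 1))
      (finSumFinEquiv (m := n) (n := 1)) =
      Matrix.fromBlocks (Matrix.of fun i j : Fin n => M i.castSucc j.castSucc)
        (Matrix.of fun (i : Fin n) (_ : Fin 1) => M i.castSucc (Fin.last n))
        (Matrix.of fun (_ : Fin 1) (j : Fin n) => M (Fin.last n) j.castSucc) D := by
    ext i j
    cases i with
    | inl i => cases j with
      | inl j => simp [Fin.castAdd, Fin.castSucc]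
      | inr j => simp [hone j, Fin.castAdd, Fin.castSucc]
    | inr i => cases j with
      | inl j => simp [hone i, Fin.castAdd, Fin.castSucc]
      | inr j => simp [hD, hone i, hone j]
  have h1 := Matrix.det_submatrix_equiv_self (finSumFinEquiv (m := n) (n := 1)) M
  rw [hsub, Matrix.det_fromBlocks₂₂] at h1
  have hinv : (⅟D : Matrix (Fin 1) (Fin 1) R) = Matrix.of (fun _ _ => a) := rfl
  rw [← h1, hinv]
  congr 1
  · simp [hD, Matrix.det_fin_one]
  · congr 1
    ext i j
    simp [Matrix.mul_apply, Fin.sum_univ_one, mul_assoc]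

structure OddFam (V : Submodule K A) : Prop where
  anti : ∀ u ∈ V, ∀ v ∈ V, u * v = -(v * u)
  sq : ∀ u ∈ V, u * u = 0
  cen : ∀ u ∈ V, ∀ v ∈ V, u * v ∈ Subalgebra.center K A
  mul3 : ∀ u ∈ V, ∀ v ∈ V, ∀ w ∈ V, u * v * w ∈ V

namespace OddFam
variable {V : Submodule K A}

def pairs (V : Submodule K A) : Set A := {p | ∃ u ∈ V, ∃ v ∈ V, p = u * v}

lemma pair_sq (h : OddFam V) {u v : A} (hu : u ∈ V) (hv : v ∈ V) :
    (u * v) * (u * v) = 0 := by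
  have h1 : v * u = -(u * v) := h.anti v hv u hu
  calc (u*v)*(u*v) = u*(v*u)*v := by noncomm_ring
    _ = u*(-(u*v))*v := by rw [h1]
    _ = -((u*u)*(v*v)) := by noncomm_ring
    _ = 0 := by rw [h.sq u hu]; simp

lemma cen_comm (h : OddFam V) {u v : A} (hu : u ∈ V) (hv : v ∈ V) (b : A) :
    u * v * b = b * (u * v) :=
  (Subalgebra.mem_center_iff.mp (h.cen u hu v hv) b).symm


lemma adjoin_mul_mem (h : OddFam V) {e : A} (he : e ∈ Algebra.adjoin K (pairs V)) :
    ∀ w ∈ V, e * w ∈ V := by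
  induction he using Algebra.adjoin_induction with
  | mem p hp =>
    obtain ⟨u, hu, v, hv, rfl⟩ := hp
    exact fun w hw => h.mul3 u hu v hv w hw
  | algebraMap r => intro w hw; rw [← Algebra.smul_def]; exact V.smul_mem r hw
  | add e₁ e₂ _ _ ih₁ ih₂ => intro w hw; rw [add_mul]; exact V.add_mem (ih₁ w hw) (ih₂ w hw)
  | mul e₁ e₂ _ _ ih₁ ih₂ => intro w hw; rw [mul_assoc]; exact ih₁ _ (ih₂ w hw)

lemma adjoin_le_center (h : OddFam V) :
    Algebra.adjoin K (pairs V) ≤ Subalgebra.center K A := by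
  apply Algebra.adjoin_le
  rintro p ⟨u, hu, v, hv, rfl⟩
  exact h.cen u hu v hv

lemma adjoin_comm (h : OddFam V) {e : A} (he : e ∈ Algebra.adjoin K (pairs V)) (b : A) :
    e * b = b * e :=
  ((Subalgebra.mem_center_iff.mp (adjoin_le_center h he)) b).symm

/-- The rank-one outer-product matrix `x ⊗ y`, valued in the center. -/
def Cmat (h : OddFam V) {m n : ℕ} (x : Fin m → A) (y : Fin n → A)
    (hx : ∀ a, x a ∈ V) (hy : ∀ b, y b ∈ V) :
    Matrix (Fin m) (Fin n) (Subalgebra.center K A) :=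
  Matrix.of fun a b => ⟨x a * y b, h.cen _ (hx a) _ (hy b)⟩

/-- The scalar `∑ y a * x a`, valued in the center. -/
def sEl (h : OddFam V) {m : ℕ} (x y : Fin m → A)
    (hx : ∀ a, x a ∈ V) (hy : ∀ a, y a ∈ V) : Subalgebra.center K A :=
  ⟨∑ a, y a * x a, sum_mem fun a _ => h.cen _ (hy a) _ (hx a)⟩

theorem ML1 (h : OddFam V) : ∀ (m : ℕ) (x y : Fin m → A)
    (hx : ∀ a, x a ∈ V) (hy : ∀ a, y a ∈ V),
    (1 - Cmat h x y hx hy).det * (1 - sEl h x y hx hy) = 1 := by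
  intro m
  induction m with
  | zero =>
    intro x y hx hy
    have h1 : sEl h x y hx hy = 0 := by
      apply Subtype.ext; simp [sEl]
    rw [h1, Matrix.det_fin_zero]
    simp
  | succ m IH =>
    intro x y hx hy
    set u := x (Fin.last m) with hu_def
    set v := y (Fin.last m) with hv_def
    have hu : u ∈ V := hx _
    have hv : v ∈ V := hy _
    set w : Subalgebra.center K A := ⟨v * u, h.cen _ hv _ hu⟩ with hw_def
    have hw2 : w * w = 0 := Subtype.ext (h.pair_sq hv hu)
    set M : Matrix (Fin (m+1)) (Fin (m+1)) (Subalgebra.center K A) :=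
      1 - Cmat h x y hx hy with hM_def
    have hMll : M (Fin.last m) (Fin.last m) = 1 + w := by
      have e1 : Cmat h x y hx hy (Fin.last m) (Fin.last m) = -w := by
        apply Subtype.ext
        show u * v = -(v * u)
        exact h.anti u hu v hv
      show (1 : Matrix (Fin (m+1)) (Fin (m+1)) (Subalgebra.center K A)) (Fin.last m) (Fin.last m)
          - Cmat h x y hx hy (Fin.last m) (Fin.last m) = 1 + w
      rw [Matrix.one_apply_eq, e1]; ring
    have hinv : M (Fin.last m) (Fin.last m) * (1 - w) = 1 := by
      rw [hMll]; linear_combination (-1 : Subalgebra.center K A) * hw2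
    set x' : Fin m → A := fun a => x a.castSucc with hx'_def
    set y' : Fin m → A := fun a => y a.castSucc with hy'_def
    have hx' : ∀ a, x' a ∈ V := fun a => hx _
    have hy' : ∀ a, y' a ∈ V := fun a => hy _
    set xt : Fin m → A := fun a => x' a + v * u * x' a with hxt_def
    have hxt : ∀ a, xt a ∈ V := fun a => V.add_mem (hx' a) (h.mul3 v hv u hu _ (hx' a))
    have hSchur : (Matrix.of fun i j : Fin m => M i.castSucc j.castSucc -
        M i.castSucc (Fin.last m) * (1 - w) * M (Fin.last m) j.castSucc) =
        1 - Cmat h xt y' hxt hy' := by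
      refine Matrix.ext fun i j => ?_
      rw [Matrix.of_apply]
      have h1 : M i.castSucc (Fin.last m) =
          -(⟨x' i * v, h.cen _ (hx' i) _ hv⟩ : Subalgebra.center K A) := by
        show (1 : Matrix (Fin (m+1)) (Fin (m+1)) (Subalgebra.center K A)) i.castSucc (Fin.last m)
            - Cmat h x y hx hy i.castSucc (Fin.last m) = _
        rw [Matrix.one_apply_ne (Fin.castSucc_lt_last i).ne, zero_sub]
        rfl
      have h2 : M (Fin.last m) j.castSucc =
          -(⟨u * y' j, h.cen _ hu _ (hy' j)⟩ : Subalgebra.center K A) := by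
        show (1 : Matrix (Fin (m+1)) (Fin (m+1)) (Subalgebra.center K A)) (Fin.last m) j.castSucc
            - Cmat h x y hx hy (Fin.last m) j.castSucc = _
        rw [Matrix.one_apply_ne (Fin.castSucc_lt_last j).ne', zero_sub]
        rfl
      have h3 : M i.castSucc j.castSucc =
          (1 : Matrix (Fin m) (Fin m) (Subalgebra.center K A)) i j -
            ⟨x' i * y' j, h.cen _ (hx' i) _ (hy' j)⟩ := by
        show (1 : Matrix (Fin (m+1)) (Fin (m+1)) (Subalgebra.center K A)) i.castSucc j.castSucc
            - Cmat h x y hx hy i.castSucc j.castSucc = _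
        congr 1
        simp [Matrix.one_apply, Fin.castSucc_inj]
      rw [h1, h2, h3]
      have key : (⟨x' i * v, h.cen _ (hx' i) _ hv⟩ : Subalgebra.center K A) * (1 - w) *
          ⟨u * y' j, h.cen _ hu _ (hy' j)⟩ =
          w * ⟨x' i * y' j, h.cen _ (hx' i) _ (hy' j)⟩ := by
        apply Subtype.ext
        show (x' i * v) * (1 - (v * u)) * (u * y' j) = (v * u) * (x' i * y' j)
        have c1 : (x' i * v) * (u * y' j) = (v * u) * (x' i * y' j) := by
          calc (x' i * v) * (u * y' j) = x' i * (v * u) * y' j := by noncomm_ring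
            _ = (v * u) * x' i * y' j := by rw [← h.cen_comm hv hu (x' i)]
            _ = (v * u) * (x' i * y' j) := by rw [mul_assoc]
        have c2 : (x' i * v) * (v * u) * (u * y' j) = 0 := by
          rw [← h.cen_comm hv hu (x' i * v), mul_assoc (v * u), c1, ← mul_assoc,
            h.pair_sq hv hu, zero_mul]
        calc (x' i * v) * (1 - (v * u)) * (u * y' j)
            = (x' i * v) * (u * y' j) - (x' i * v) * (v * u) * (u * y' j) := by noncomm_ring
          _ = (v * u) * (x' i * y' j) - 0 := by rw [c1, c2]
          _ = (v * u) * (x' i * y' j) := by rw [sub_zero]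
      rw [show -(⟨x' i * v, h.cen _ (hx' i) _ hv⟩ : Subalgebra.center K A) * (1 - w) *
          -(⟨u * y' j, h.cen _ hu _ (hy' j)⟩ : Subalgebra.center K A) =
          (⟨x' i * v, h.cen _ (hx' i) _ hv⟩ : Subalgebra.center K A) * (1 - w) *
          ⟨u * y' j, h.cen _ hu _ (hy' j)⟩ from by ring, key]
      have hC : Cmat h xt y' hxt hy' i j =
          ⟨x' i * y' j, h.cen _ (hx' i) _ (hy' j)⟩ +
            w * ⟨x' i * y' j, h.cen _ (hx' i) _ (hy' j)⟩ := by
        apply Subtype.ext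
        show xt i * y' j = x' i * y' j + (v * u) * (x' i * y' j)
        rw [hxt_def]
        noncomm_ring
      rw [Matrix.sub_apply, hC]
      ring
    have hdet := det_peel M (1 - w) hinv
    rw [hSchur, hMll] at hdet
    have hs : sEl h x y hx hy = sEl h x' y' hx' hy' + w := by
      apply Subtype.ext
      show ∑ a, y a * x a = (∑ a, y' a * x' a) + v * u
      rw [Fin.sum_univ_castSucc]
    have hst : sEl h xt y' hxt hy' = (1 + w) * sEl h x' y' hx' hy' := by
      apply Subtype.ext
      show ∑ a, y' a * xt a = (1 + v * u) * ∑ a, y' a * x' a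
      rw [add_mul, one_mul, Finset.mul_sum, ← Finset.sum_add_distrib]
      apply Finset.sum_congr rfl
      intro a _
      have hc : v * u * y' a = y' a * (v * u) := h.cen_comm hv hu (y' a)
      calc y' a * xt a = y' a * x' a + (y' a * (v * u)) * x' a := by
            rw [hxt_def]; noncomm_ring
        _ = y' a * x' a + v * u * (y' a * x' a) := by rw [← hc, mul_assoc]
    have hIH := IH xt y' hxt hy'
    rw [hst] at hIH
    show M.det * (1 - sEl h x y hx hy) = 1
    rw [hdet, hs]
    calc (1 + w) * (1 - Cmat h xt y' hxt hy').det * (1 - (sEl h x' y' hx' hy' + w))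
        = (1 - Cmat h xt y' hxt hy').det * ((1 + w) * (1 - (sEl h x' y' hx' hy' + w))) := by
          ring
      _ = (1 - Cmat h xt y' hxt hy').det * (1 - (1 + w) * sEl h x' y' hx' hy') := by
          congr 1
          linear_combination (-1 : Subalgebra.center K A) * hw2
      _ = 1 := hIH

/-- The matrix `X·Y`, valued in the center. -/
def Pmat (h : OddFam V) {m n : ℕ} (X : Fin m → Fin n → A) (Y : Fin n → Fin m → A)
    (hX : ∀ a i, X a i ∈ V) (hY : ∀ i a, Y i a ∈ V) :
    Matrix (Fin m) (Fin m) (Subalgebra.center K A) :=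
  Matrix.of fun a b => ⟨∑ i, X a i * Y i b, sum_mem fun i _ => h.cen _ (hX a i) _ (hY i b)⟩

theorem ML (h : OddFam V) : ∀ (n m : ℕ) (X : Fin m → Fin n → A) (Y : Fin n → Fin m → A)
    (hX : ∀ a i, X a i ∈ V) (hY : ∀ i a, Y i a ∈ V),
    (1 - Pmat h X Y hX hY).det * (1 - Pmat h Y X hY hX).det = 1 := by
  intro n
  induction n with
  | zero =>
    intro m X Y hX hY
    have h1 : (1 : Matrix (Fin m) (Fin m) (Subalgebra.center K A)) - Pmat h X Y hX hY = 1 := by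
      refine Matrix.ext fun a b => Subtype.ext ?_
      show ((1 : Matrix (Fin m) (Fin m) (Subalgebra.center K A)) a b : A) -
        ((∑ i : Fin 0, X a i * Y i b : A)) = _
      simp
    have h2 : (1 - Pmat h Y X hY hX).det = 1 := Matrix.det_fin_zero
    rw [h1, h2, Matrix.det_one, one_mul]
  | succ n IHn =>
    intro m X Y hX hY
    set x : Fin m → A := fun a => X a (Fin.last n) with hx_def
    set y : Fin m → A := fun b => Y (Fin.last n) b with hy_def
    have hx : ∀ a, x a ∈ V := fun a => hX a _
    have hy : ∀ a, y a ∈ V := fun a => hY _ a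
    set X' : Fin m → Fin n → A := fun a j => X a j.castSucc with hX'_def
    set Y' : Fin n → Fin m → A := fun j b => Y j.castSucc b with hY'_def
    have hX' : ∀ a j, X' a j ∈ V := fun a j => hX a _
    have hY' : ∀ j a, Y' j a ∈ V := fun j a => hY _ a
    set s : Subalgebra.center K A := sEl h x y hx hy with hs_def
    -- s is nilpotent
    have hsnil : IsNilpotent s := by
      have e : s = ∑ a, (⟨y a * x a, h.cen _ (hy a) _ (hx a)⟩ : Subalgebra.center K A) := by
        apply Subtype.ext
        show (∑ a, y a * x a) = _
        push_cast
        rfl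
      rw [e]
      apply isNilpotent_sum
      · intro a _
        exact ⟨2, by rw [pow_two]; exact Subtype.ext (h.pair_sq (hy a) (hx a))⟩
    obtain ⟨KK, hKK⟩ := hsnil
    set α : Subalgebra.center K A := ∑ k ∈ Finset.range KK, s ^ k with hα_def
    have hα1 : (1 - s) * α = 1 := by
      have hg := geom_sum_mul s KK
      rw [hKK] at hg
      linear_combination (-1 : Subalgebra.center K A) * hg
    have hαadj : (α : A) ∈ Algebra.adjoin K (pairs V) := by
      have hsadj : (s : A) ∈ Algebra.adjoin K (pairs V) := by
        show (∑ a, y a * x a) ∈ _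
        exact sum_mem fun a _ => Algebra.subset_adjoin ⟨y a, hy a, x a, hx a, rfl⟩
      have e : (α : A) = ∑ k ∈ Finset.range KK, (s : A) ^ k := by
        rw [hα_def]; push_cast; rfl
      rw [e]
      exact sum_mem fun k _ => pow_mem hsadj k
    have hαV : ∀ w ∈ V, (α : A) * w ∈ V := h.adjoin_mul_mem hαadj
    have hαcomm : ∀ b : A, (α : A) * b = b * (α : A) := h.adjoin_comm hαadj
    set X'' : Fin m → Fin n → A :=
      fun a j => X' a j + (α : A) * ∑ b, x a * y b * X' b j with hX''_def
    have hX'' : ∀ a j, X'' a j ∈ V := fun a j =>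
      V.add_mem (hX' a j)
        (hαV _ (sum_mem fun b _ => h.mul3 _ (hx a) _ (hy b) _ (hX' b j)))
    set B := Pmat h X' Y' hX' hY' with hB_def
    set C := Cmat h x y hx hy with hC_def
    -- (F1)
    have hP : Pmat h X Y hX hY = B + C := by
      refine Matrix.ext fun a b => Subtype.ext ?_
      show ∑ i, X a i * Y i b = (∑ j, X' a j * Y' j b) + x a * y b
      rw [Fin.sum_univ_castSucc]
    -- (F2)
    have hCC : C * C = s • C := by
      refine Matrix.ext fun a c => Subtype.ext ?_
      have key : ∑ b, (x a * y b) * (x b * y c) = (∑ b, y b * x b) * (x a * y c) := by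
        rw [Finset.sum_mul]
        apply Finset.sum_congr rfl
        intro b _
        calc (x a * y b) * (x b * y c) = x a * (y b * x b) * y c := by noncomm_ring
          _ = (y b * x b) * x a * y c := by rw [← h.cen_comm (hy b) (hx b) (x a)]
          _ = (y b * x b) * (x a * y c) := by rw [mul_assoc]
      calc ((C * C) a c : A) = ∑ b, (x a * y b) * (x b * y c) := by
            rw [Matrix.mul_apply]; push_cast; rfl
        _ = (∑ b, y b * x b) * (x a * y c) := key
        _ = ((s • C) a c : A) := by
            rw [Matrix.smul_apply, smul_eq_mul]; push_cast; rfl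
    -- (F3)
    have hP'' : Pmat h X'' Y' hX'' hY' = B + α • (C * B) := by
      refine Matrix.ext fun a c => Subtype.ext ?_
      have rhs : ((B + α • (C * B)) a c : A) =
          (∑ j, X' a j * Y' j c) + (α : A) * ∑ b, (x a * y b) * (∑ j, X' b j * Y' j c) := by
        rw [Matrix.add_apply, Matrix.smul_apply, Matrix.mul_apply, smul_eq_mul]
        push_cast; rfl
      rw [rhs]
      show ∑ j, X'' a j * Y' j c =
        (∑ j, X' a j * Y' j c) + (α : A) * ∑ b, (x a * y b) * (∑ j, X' b j * Y' j c)
      have e1 : ∀ j, X'' a j * Y' j c =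
          X' a j * Y' j c + (α : A) * ∑ b, (x a * y b * X' b j) * Y' j c := by
        intro j
        rw [hX''_def]
        show (X' a j + (α : A) * ∑ b, x a * y b * X' b j) * Y' j c = _
        rw [add_mul, mul_assoc, Finset.sum_mul]
      rw [Finset.sum_congr rfl fun j _ => e1 j, Finset.sum_add_distrib, ← Finset.mul_sum]
      congr 1
      rw [Finset.sum_comm]
      congr 1
      apply Finset.sum_congr rfl
      intro b _
      rw [Finset.mul_sum]
      apply Finset.sum_congr rfl
      intro j _
      noncomm_ring
    -- (F4)
    have hcoef : α - α * s - 1 = 0 := by linear_combination hα1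
    have hfact : (1 + α • C) * (1 - (B + C)) = 1 - Pmat h X'' Y' hX'' hY' := by
      have hmul : (α • C) * (1 - (B + C)) = α • C - α • (C * B) - (α * s) • C := by
        rw [Matrix.smul_mul, mul_sub, mul_one, mul_add, hCC, smul_sub, smul_add, smul_smul]
        abel
      have expand : (1 + α • C) * (1 - (B + C)) =
          1 - B - α • (C * B) + (α • C - (α * s) • C - C) := by
        rw [add_mul, one_mul, hmul]
        abel
      have hzero : α • C - (α * s) • C - C = 0 := by
        have e : α • C - (α * s) • C - C = (α - α * s - 1) • C := by
          rw [sub_smul, sub_smul, one_smul]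
        rw [e, hcoef, zero_smul]
      rw [expand, hzero, add_zero, hP'', sub_add_eq_sub_sub]
    -- (F6)
    have hdetC : (1 + α • C).det = 1 - s := by
      set xh : Fin m → A := fun a => -((α : A) * x a) with hxh_def
      have hxh : ∀ a, xh a ∈ V := fun a => V.neg_mem (hαV _ (hx a))
      have e1 : Cmat h xh y hxh hy = -(α • C) := by
        refine Matrix.ext fun a b => Subtype.ext ?_
        show -((α : A) * x a) * y b = -((α : A) * (x a * y b))
        rw [neg_mul, mul_assoc]
      have e2 : sEl h xh y hxh hy = -(α * s) := by
        apply Subtype.ext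
        show ∑ a, y a * -((α : A) * x a) = -((α : A) * ∑ a, y a * x a)
        rw [Finset.mul_sum, ← Finset.sum_neg_distrib]
        apply Finset.sum_congr rfl
        intro a _
        rw [mul_neg, ← mul_assoc, ← hαcomm (y a), mul_assoc]
      have hml1 := ML1 h m xh y hxh hy
      rw [e1, e2, sub_neg_eq_add, sub_neg_eq_add] at hml1
      have h2 : (1 + α * s) * (1 - s) = 1 := by linear_combination s * hα1
      calc (1 + α • C).det = (1 + α • C).det * ((1 + α * s) * (1 - s)) := by rw [h2, mul_one]
        _ = ((1 + α • C).det * (1 + α * s)) * (1 - s) := by ring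
        _ = 1 * (1 - s) := by rw [hml1]
        _ = 1 - s := one_mul _
    -- (F7)
    have hQll : (1 - Pmat h Y X hY hX) (Fin.last n) (Fin.last n) = 1 - s := by
      show (1 : Matrix (Fin (n+1)) (Fin (n+1)) (Subalgebra.center K A)) (Fin.last n) (Fin.last n)
        - Pmat h Y X hY hX (Fin.last n) (Fin.last n) = 1 - s
      rw [Matrix.one_apply_eq]
      rfl
    have hqinv : (1 - Pmat h Y X hY hX) (Fin.last n) (Fin.last n) * α = 1 := by
      rw [hQll]; exact hα1
    have hdetq := det_peel (1 - Pmat h Y X hY hX) α hqinv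
    rw [hQll] at hdetq
    have hQSchur : (Matrix.of fun i j : Fin n =>
        (1 - Pmat h Y X hY hX) i.castSucc j.castSucc -
          (1 - Pmat h Y X hY hX) i.castSucc (Fin.last n) * α *
            (1 - Pmat h Y X hY hX) (Fin.last n) j.castSucc) =
        1 - Pmat h Y' X'' hY' hX'' := by
      refine Matrix.ext fun i j => ?_
      rw [Matrix.of_apply]
      have col : Fin m → A := fun a => Y' i a * x a
      have e2 : (1 - Pmat h Y X hY hX) i.castSucc (Fin.last n) =
          -(⟨∑ a, Y' i a * x a, sum_mem fun a _ => h.cen _ (hY' i a) _ (hx a)⟩ :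
            Subalgebra.center K A) := by
        show (1 : Matrix (Fin (n+1)) (Fin (n+1)) (Subalgebra.center K A)) i.castSucc (Fin.last n)
          - Pmat h Y X hY hX i.castSucc (Fin.last n) = _
        rw [Matrix.one_apply_ne (Fin.castSucc_lt_last i).ne, zero_sub]
        rfl
      have e3 : (1 - Pmat h Y X hY hX) (Fin.last n) j.castSucc =
          -(⟨∑ a, y a * X' a j, sum_mem fun a _ => h.cen _ (hy a) _ (hX' a j)⟩ :
            Subalgebra.center K A) := by
        show (1 : Matrix (Fin (n+1)) (Fin (n+1)) (Subalgebra.center K A)) (Fin.last n) j.castSucc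
          - Pmat h Y X hY hX (Fin.last n) j.castSucc = _
        rw [Matrix.one_apply_ne (Fin.castSucc_lt_last j).ne', zero_sub]
        rfl
      have e1 : (1 - Pmat h Y X hY hX) i.castSucc j.castSucc =
          (1 : Matrix (Fin n) (Fin n) (Subalgebra.center K A)) i j -
            Pmat h Y' X' hY' hX' i j := by
        show (1 : Matrix (Fin (n+1)) (Fin (n+1)) (Subalgebra.center K A)) i.castSucc j.castSucc
          - Pmat h Y X hY hX i.castSucc j.castSucc = _
        congr 1
        simp [Matrix.one_apply, Fin.castSucc_inj]
      rw [e1, e2, e3]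
      have hQ'' : Pmat h Y' X'' hY' hX'' i j = Pmat h Y' X' hY' hX' i j +
          α * (⟨∑ a, Y' i a * x a, sum_mem fun a _ => h.cen _ (hY' i a) _ (hx a)⟩ *
            (⟨∑ a, y a * X' a j, sum_mem fun a _ => h.cen _ (hy a) _ (hX' a j)⟩ :
              Subalgebra.center K A)) := by
        apply Subtype.ext
        show ∑ a, Y' i a * X'' a j = (∑ a, Y' i a * X' a j) +
          (α : A) * ((∑ a, Y' i a * x a) * (∑ b, y b * X' b j))
        have e4 : ∀ a, Y' i a * X'' a j =
            Y' i a * X' a j + (α : A) * ∑ b, (Y' i a * x a) * (y b * X' b j) := by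
          intro a
          rw [hX''_def]
          show Y' i a * (X' a j + (α : A) * ∑ b, x a * y b * X' b j) = _
          rw [mul_add]
          congr 1
          rw [← mul_assoc, ← hαcomm (Y' i a), mul_assoc]
          congr 1
          rw [Finset.mul_sum]
          apply Finset.sum_congr rfl
          intro b _
          noncomm_ring
        rw [Finset.sum_congr rfl fun a _ => e4 a, Finset.sum_add_distrib, ← Finset.mul_sum]
        congr 1
        rw [Finset.sum_mul]
        congr 1
        apply Finset.sum_congr rfl
        intro a _
        rw [Finset.mul_sum]
      show _ = (1 : Matrix (Fin n) (Fin n) (Subalgebra.center K A)) i j -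
        Pmat h Y' X'' hY' hX'' i j
      rw [hQ'']
      ring
    rw [hQSchur] at hdetq
    -- assembly
    have hIH := IHn m X'' Y' hX'' hY'
    have hF5 : (1 + α • C).det * (1 - (B + C)).det = (1 - Pmat h X'' Y' hX'' hY').det := by
      rw [← Matrix.det_mul, hfact]
    rw [hdetC] at hF5
    rw [hP, hdetq]
    calc (1 - (B + C)).det * ((1 - s) * (1 - Pmat h Y' X'' hY' hX'').det)
        = ((1 - s) * (1 - (B + C)).det) * (1 - Pmat h Y' X'' hY' hX'').det := by ring
      _ = (1 - Pmat h X'' Y' hX'' hY').det * (1 - Pmat h Y' X'' hY' hX'').det := by rw [hF5]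
      _ = 1 := hIH

end OddFam
end OddFam

section Ext
variable {K : Type*} [Field K] [CharZero K] {Mo : Type*} [AddCommGroup Mo] [Module K Mo]

local notation "ιK" => ExteriorAlgebra.ι K (M := Mo)

/-- odd monomials -/
def oddMon : Set (ExteriorAlgebra K Mo) :=
  {g | ∃ l : List Mo, Odd l.length ∧ g = (l.map (ExteriorAlgebra.ι K)).prod}

def Vodd : Submodule K (ExteriorAlgebra K Mo) := Submodule.span K (oddMon (K := K) (Mo := Mo))

lemma ι_swap (xv yv : Mo) : (ιK) yv * (ιK) xv = -((ιK) xv * (ιK) yv) :=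
  eq_neg_of_add_eq_zero_left (ExteriorAlgebra.ι_add_mul_swap (R := K) yv xv)

lemma neg_one_pow_comm (g : ExteriorAlgebra K Mo) (k : ℕ) :
    g * (-1 : ExteriorAlgebra K Mo) ^ k = (-1 : ExteriorAlgebra K Mo) ^ k * g := by
  rcases Nat.even_or_odd k with he | ho
  · rw [he.neg_one_pow, mul_one, one_mul]
  · rw [ho.neg_one_pow, mul_neg_one, neg_one_mul]

lemma prod_mul_ι (l : List Mo) (xv : Mo) :
    (l.map (ExteriorAlgebra.ι K)).prod * (ιK) xv =
      (-1 : ExteriorAlgebra K Mo) ^ l.length * ((ιK) xv * (l.map (ExteriorAlgebra.ι K)).prod) := by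
  induction l with
  | nil => simp
  | cons yv l ih =>
    simp only [List.map_cons, List.prod_cons, List.length_cons, pow_succ]
    rw [mul_assoc, ih, ← mul_assoc, neg_one_pow_comm ((ιK) yv) l.length,
      mul_assoc ((-1 : ExteriorAlgebra K Mo) ^ l.length), ← mul_assoc ((ιK) yv), ι_swap xv yv]
    generalize (-1 : ExteriorAlgebra K Mo) ^ l.length = c
    noncomm_ring

lemma prod_mul_prod (l₁ l₂ : List Mo) :
    (l₁.map (ExteriorAlgebra.ι K)).prod * (l₂.map (ExteriorAlgebra.ι K)).prod =
      (-1 : ExteriorAlgebra K Mo) ^ (l₁.length * l₂.length) *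
        ((l₂.map (ExteriorAlgebra.ι K)).prod * (l₁.map (ExteriorAlgebra.ι K)).prod) := by
  induction l₂ with
  | nil => simp
  | cons xv l₂ ih =>
    simp only [List.map_cons, List.prod_cons, List.length_cons]
    rw [← mul_assoc, prod_mul_ι, mul_assoc, mul_assoc ((ιK) xv), ih,
      ← mul_assoc ((ιK) xv), neg_one_pow_comm ((ιK) xv) (l₁.length * l₂.length),
      mul_assoc ((-1 : ExteriorAlgebra K Mo) ^ (l₁.length * l₂.length)),
      ← mul_assoc ((-1 : ExteriorAlgebra K Mo) ^ l₁.length), ← pow_add,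
      ← mul_assoc ((ιK) xv)]
    have he : l₁.length + l₁.length * l₂.length = l₁.length * (l₂.length + 1) := by ring
    rw [he]

set_option linter.unusedSectionVars false

lemma Vodd_anti : ∀ u ∈ Vodd (K := K) (Mo := Mo), ∀ v ∈ Vodd (K := K) (Mo := Mo),
    u * v = -(v * u) := by
  intro u hu v hv
  refine Submodule.span_induction₂ (p := fun x y _ _ => x * y = -(y * x))
    ?_ ?_ ?_ ?_ ?_ ?_ ?_ hu hv
  · rintro x y ⟨l₁, ho₁, rfl⟩ ⟨l₂, ho₂, rfl⟩
    rw [prod_mul_prod, (ho₁.mul ho₂).neg_one_pow, neg_one_mul]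
  · intro y _; simp
  · intro x _; simp
  · intro x y z _ _ _ h1 h2
    rw [add_mul, h1, h2, mul_add, neg_add]
  · intro x y z _ _ _ h1 h2
    rw [mul_add, h1, h2, add_mul, neg_add]
  · intro r x y _ _ hp
    rw [smul_mul_assoc, hp, mul_smul_comm, smul_neg]
  · intro r x y _ _ hp
    rw [mul_smul_comm, hp, smul_mul_assoc, smul_neg]

lemma Vodd_sq : ∀ u ∈ Vodd (K := K) (Mo := Mo), u * u = 0 := by
  intro u hu
  have h1 := Vodd_anti u hu u hu
  have h2 : (2 : K) • (u * u) = 0 := by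
    rw [two_smul]
    nth_rewrite 1 [h1]
    exact neg_add_cancel _
  calc u * u = ((2 : K)⁻¹ * 2) • (u * u) := by norm_num
    _ = (2 : K)⁻¹ • ((2 : K) • (u * u)) := by rw [mul_smul]
    _ = 0 := by rw [h2, smul_zero]

lemma center_of_commutes_ι (g : ExteriorAlgebra K Mo)
    (hg : ∀ xv : Mo, g * (ιK) xv = (ιK) xv * g) :
    g ∈ Subalgebra.center K (ExteriorAlgebra K Mo) := by
  rw [Subalgebra.mem_center_iff]
  intro b
  induction b using ExteriorAlgebra.induction with
  | algebraMap r => exact Algebra.commutes r g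
  | ι xv => exact (hg xv).symm
  | mul a b ha hb => rw [mul_assoc, hb, ← mul_assoc, ha, mul_assoc]
  | add a b ha hb => rw [add_mul, mul_add, ha, hb]

lemma Vodd_cen : ∀ u ∈ Vodd (K := K) (Mo := Mo), ∀ v ∈ Vodd (K := K) (Mo := Mo),
    u * v ∈ Subalgebra.center K (ExteriorAlgebra K Mo) := by
  intro u hu v hv
  refine Submodule.span_induction₂
    (p := fun x y _ _ => x * y ∈ Subalgebra.center K (ExteriorAlgebra K Mo))
    ?_ ?_ ?_ ?_ ?_ ?_ ?_ hu hv
  · rintro x y ⟨l₁, ho₁, rfl⟩ ⟨l₂, ho₂, rfl⟩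
    rw [← List.prod_append, ← List.map_append]
    apply center_of_commutes_ι
    intro xv
    rw [prod_mul_ι, List.length_append, (ho₁.add_odd ho₂).neg_one_pow, one_mul]
  · intro y _; rw [zero_mul]; exact zero_mem _
  · intro x _; rw [mul_zero]; exact zero_mem _
  · intro x y z _ _ _ h1 h2; rw [add_mul]; exact add_mem h1 h2
  · intro x y z _ _ _ h1 h2; rw [mul_add]; exact add_mem h1 h2
  · intro r x y _ _ hp; rw [smul_mul_assoc]; exact Subalgebra.smul_mem _ hp r
  · intro r x y _ _ hp; rw [mul_smul_comm]; exact Subalgebra.smul_mem _ hp r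

lemma Vodd_mul3 : ∀ u ∈ Vodd (K := K) (Mo := Mo), ∀ v ∈ Vodd (K := K) (Mo := Mo),
    ∀ w ∈ Vodd (K := K) (Mo := Mo), u * v * w ∈ Vodd (K := K) (Mo := Mo) := by
  intro u hu v hv
  refine Submodule.span_induction₂ (p := fun x y _ _ =>
    ∀ w ∈ Vodd (K := K) (Mo := Mo), x * y * w ∈ Vodd (K := K) (Mo := Mo))
    ?_ ?_ ?_ ?_ ?_ ?_ ?_ hu hv
  · rintro x y ⟨l₁, ho₁, rfl⟩ ⟨l₂, ho₂, rfl⟩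
    intro w hw
    induction hw using Submodule.span_induction with
    | mem g hg =>
      obtain ⟨l₃, ho₃, rfl⟩ := hg
      rw [← List.prod_append, ← List.map_append, ← List.prod_append, ← List.map_append]
      apply Submodule.subset_span
      refine ⟨l₁ ++ l₂ ++ l₃, ?_, rfl⟩
      rw [List.length_append, List.length_append]
      exact (ho₁.add_odd ho₂).add_odd ho₃
    | zero => rw [mul_zero]; exact zero_mem _
    | add a b _ _ h1 h2 => rw [mul_add]; exact add_mem h1 h2
    | smul r a _ hp => rw [mul_smul_comm]; exact Submodule.smul_mem _ r hp
  · intro y _ w hw; rw [zero_mul, zero_mul]; exact zero_mem _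
  · intro x _ w hw; rw [mul_zero, zero_mul]; exact zero_mem _
  · intro x y z _ _ _ h1 h2 w hw
    rw [add_mul, add_mul]; exact add_mem (h1 w hw) (h2 w hw)
  · intro x y z _ _ _ h1 h2 w hw
    rw [mul_add, add_mul]; exact add_mem (h1 w hw) (h2 w hw)
  · intro r x y _ _ hp w hw
    rw [smul_mul_assoc, smul_mul_assoc]; exact Submodule.smul_mem _ r (hp w hw)
  · intro r x y _ _ hp w hw
    rw [mul_smul_comm, smul_mul_assoc]; exact Submodule.smul_mem _ r (hp w hw)

end Ext


set_option linter.unusedSectionVars false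

/-- transfer `ndet` along a ring hom from a commutative ring -/
lemma ndet_coe {R S : Type*} [CommRing R] [Ring S] (f : R →+* S) {n : ℕ}
    (Mx : Matrix (Fin n) (Fin n) R) :
    ndet (Matrix.of fun i j => f (Mx i j)) = f Mx.det := by
  unfold ndet
  rw [Matrix.det_apply', map_sum]
  refine Finset.sum_congr rfl fun σ _ => ?_
  rw [zsmul_eq_mul, map_mul, map_intCast]
  congr 1
  have h1 : (List.ofFn fun j => Matrix.of (fun i j => f (Mx i j)) (σ j) j) =
      (List.ofFn fun j => Mx (σ j) j).map f := by rw [List.map_ofFn]; rfl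
  rw [h1, List.prod_hom _ f, List.prod_ofFn]

noncomputable instance : CharZero K15 :=
  charZero_of_injective_algebraMap
    (IsFractionRing.injective (MvPolynomial (Fin 2) ℂ) K15)

lemma l15_sub_ne (w : ℂ) : l15 - c15 w ≠ 0 := by
  rw [l15, c15, ← map_sub]
  intro hcon
  have h0 : (MvPolynomial.X 1 - MvPolynomial.C w : MvPolynomial (Fin 2) ℂ) = 0 := by
    apply IsFractionRing.injective (MvPolynomial (Fin 2) ℂ) K15
    rw [hcon, map_zero]
  have h1 := congrArg (MvPolynomial.eval fun _ : Fin 2 => w + 1) h0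
  rw [map_sub, MvPolynomial.eval_X, MvPolynomial.eval_C, map_zero] at h1
  simp at h1

lemma z15_sub_ne (w : ℂ) : z15 - c15 w ≠ 0 := by
  rw [z15, c15, ← map_sub]
  intro hcon
  have h0 : (MvPolynomial.X 0 - MvPolynomial.C w : MvPolynomial (Fin 2) ℂ) = 0 := by
    apply IsFractionRing.injective (MvPolynomial (Fin 2) ℂ) K15
    rw [hcon, map_zero]
  have h1 := congrArg (MvPolynomial.eval fun _ : Fin 2 => w + 1) h0
  rw [map_sub, MvPolynomial.eval_X, MvPolynomial.eval_C, map_zero] at h1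
  simp at h1



lemma scalar_entry {K A : Type*} [CommRing K] [Ring A] [Algebra K A] (g h' : A) (r c d : K)
    (hrd : r * d = 1) :
    algebraMap K A r * ((d • g) * (c • h')) = g * h' * algebraMap K A c := by
  rw [smul_mul_assoc, mul_smul_comm c g h', smul_smul, Algebra.smul_def, ← mul_assoc,
    ← map_mul]
  have e : r * (d * c) = c := by rw [← mul_assoc, hrd, one_mul]
  rw [e, Algebra.commutes c (g * h'), mul_assoc]

set_option maxHeartbeats 12000000
set_option synthInstance.maxHeartbeats 2000000

/-- Fermionic `(𝔤𝔩_M, 𝔤𝔩_N)`-duality with regular singularities: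
`det((λ-λ_a)δ_{ab} - ∑_i π^a_i ψ^b_i/(z-z_i)) · det((z-z_i)δ_{ij} - ∑_a ψ^a_i π^a_j/(λ-λ_a))
  = ∏_i (z-z_i) · ∏_a (λ-λ_a)`. -/
theorem stmt15 (M N : ℕ) (zi : Fin N → ℂ) (la : Fin M → ℂ)
    (hz : Function.Injective zi) (hl : Function.Injective la) :
    ndet (Matrix.of fun a b : Fin M =>
        algebraMap K15 (Gr M N) ((l15 - c15 (la a)) * (if a = b then 1 else 0)) -
          ∑ i, (πg M N a i * ψg M N b i) * algebraMap K15 (Gr M N) (z15 - c15 (zi i))⁻¹) *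
    ndet (Matrix.of fun i j : Fin N =>
        algebraMap K15 (Gr M N) ((z15 - c15 (zi i)) * (if i = j then 1 else 0)) -
          ∑ a, (ψg M N a i * πg M N a j) * algebraMap K15 (Gr M N) (l15 - c15 (la a))⁻¹) =
    algebraMap K15 (Gr M N)
      ((∏ i, (z15 - c15 (zi i))) * ∏ a, (l15 - c15 (la a))) := by
  classical
  have hfam : OddFam (Vodd (K := K15) (Mo := (Bool × Fin M × Fin N) →₀ K15)) :=
    ⟨Vodd_anti, Vodd_sq, Vodd_cen, Vodd_mul3⟩
  set V := Vodd (K := K15) (Mo := (Bool × Fin M × Fin N) →₀ K15) with hV_def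
  set dK : Fin M → K15 := fun a => (l15 - c15 (la a))⁻¹ with hdK_def
  set cK : Fin N → K15 := fun i => (z15 - c15 (zi i))⁻¹ with hcK_def
  have hdK : ∀ a, (l15 - c15 (la a)) * dK a = 1 := fun a => mul_inv_cancel₀ (l15_sub_ne (la a))
  have hcK : ∀ i, (z15 - c15 (zi i)) * cK i = 1 := fun i => mul_inv_cancel₀ (z15_sub_ne (zi i))
  set X : Fin M → Fin N → Gr M N := fun a i => dK a • πg M N a i with hX_def
  set Y : Fin N → Fin M → Gr M N := fun i b => cK i • ψg M N b i with hY_def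
  have hπmem : ∀ a i, πg M N a i ∈ V := by
    intro a i
    apply Submodule.subset_span
    exact ⟨[Finsupp.single (true, a, i) 1], by simp, by simp [πg]⟩
  have hψmem : ∀ a i, ψg M N a i ∈ V := by
    intro a i
    apply Submodule.subset_span
    exact ⟨[Finsupp.single (false, a, i) 1], by simp, by simp [ψg]⟩
  have hXmem : ∀ a i, X a i ∈ V := fun a i => V.smul_mem _ (hπmem a i)
  have hYmem : ∀ i b, Y i b ∈ V := fun i b => V.smul_mem _ (hψmem b i)
  set Pm := OddFam.Pmat hfam X Y hXmem hYmem with hPm_def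
  set Qm := OddFam.Pmat hfam Y X hYmem hXmem with hQm_def
  set dlE : Fin M → Subalgebra.center K15 (Gr M N) := fun a =>
    ⟨algebraMap K15 (Gr M N) (l15 - c15 (la a)), Subalgebra.algebraMap_mem _ _⟩ with hdlE_def
  set dzE : Fin N → Subalgebra.center K15 (Gr M N) := fun i =>
    ⟨algebraMap K15 (Gr M N) (z15 - c15 (zi i)), Subalgebra.algebraMap_mem _ _⟩ with hdzE_def
  set M1E := Matrix.diagonal dlE * (1 - Pm) with hM1E_def
  set M2E := Matrix.diagonal dzE * (1 - Qm) with hM2E_def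
  set f : Subalgebra.center K15 (Gr M N) →+* Gr M N :=
    (Subalgebra.val (Subalgebra.center K15 (Gr M N))).toRingHom with hf_def
  -- identify the two statement matrices
  have hmap1 : (Matrix.of fun a b : Fin M =>
      algebraMap K15 (Gr M N) ((l15 - c15 (la a)) * (if a = b then 1 else 0)) -
        ∑ i, (πg M N a i * ψg M N b i) * algebraMap K15 (Gr M N) (z15 - c15 (zi i))⁻¹) =
      Matrix.of fun a b => f (M1E a b) := by
    refine Matrix.ext fun a b => ?_
    rw [Matrix.of_apply, Matrix.of_apply]
    have hval : f (M1E a b) = algebraMap K15 (Gr M N) (l15 - c15 (la a)) *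
        ((if a = b then (1 : Gr M N) else 0) - ∑ i, X a i * Y i b) := by
      rw [hM1E_def]
      rw [show (Matrix.diagonal dlE * (1 - Pm)) a b = dlE a * ((1 - Pm) a b) from
        Matrix.diagonal_mul _ _ _ _]
      rw [map_mul]
      congr 1
      have : (1 - Pm) a b = (1 : Matrix (Fin M) (Fin M) (Subalgebra.center K15 (Gr M N))) a b
          - Pm a b := rfl
      rw [this, map_sub]
      congr 1
      rw [Matrix.one_apply]
      split
      · exact map_one f
      · exact map_zero f
    rw [hval, mul_sub]
    congr 1
    · rw [map_mul, apply_ite (algebraMap K15 (Gr M N)), map_one, map_zero]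
    · rw [Finset.mul_sum]
      refine Finset.sum_congr rfl fun i _ => ?_
      rw [hX_def, hY_def]
      show πg M N a i * ψg M N b i * algebraMap K15 (Gr M N) (cK i) =
        algebraMap K15 (Gr M N) (l15 - c15 (la a)) *
          ((dK a • πg M N a i) * (cK i • ψg M N b i))
      exact (scalar_entry (πg M N a i) (ψg M N b i) _ (cK i) (dK a) (hdK a)).symm
  have hmap2 : (Matrix.of fun i j : Fin N =>
      algebraMap K15 (Gr M N) ((z15 - c15 (zi i)) * (if i = j then 1 else 0)) -
        ∑ a, (ψg M N a i * πg M N a j) * algebraMap K15 (Gr M N) (l15 - c15 (la a))⁻¹) =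
      Matrix.of fun i j => f (M2E i j) := by
    refine Matrix.ext fun i j => ?_
    rw [Matrix.of_apply, Matrix.of_apply]
    have hval : f (M2E i j) = algebraMap K15 (Gr M N) (z15 - c15 (zi i)) *
        ((if i = j then (1 : Gr M N) else 0) - ∑ a, Y i a * X a j) := by
      rw [hM2E_def]
      rw [show (Matrix.diagonal dzE * (1 - Qm)) i j = dzE i * ((1 - Qm) i j) from
        Matrix.diagonal_mul _ _ _ _]
      rw [map_mul]
      congr 1
      have : (1 - Qm) i j = (1 : Matrix (Fin N) (Fin N) (Subalgebra.center K15 (Gr M N))) i j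
          - Qm i j := rfl
      rw [this, map_sub]
      congr 1
      rw [Matrix.one_apply]
      split
      · exact map_one f
      · exact map_zero f
    rw [hval, mul_sub]
    congr 1
    · rw [map_mul, apply_ite (algebraMap K15 (Gr M N)), map_one, map_zero]
    · rw [Finset.mul_sum]
      refine Finset.sum_congr rfl fun a _ => ?_
      rw [hX_def, hY_def]
      show ψg M N a i * πg M N a j * algebraMap K15 (Gr M N) (dK a) =
        algebraMap K15 (Gr M N) (z15 - c15 (zi i)) *
          ((cK i • ψg M N a i) * (dK a • πg M N a j))
      exact (scalar_entry (ψg M N a i) (πg M N a j) _ (dK a) (cK i) (hcK i)).symm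
  rw [hmap1, hmap2, ndet_coe, ndet_coe, ← map_mul]
  have hdet1 : M1E.det = (∏ a, dlE a) * (1 - Pm).det := by
    rw [hM1E_def, Matrix.det_mul, Matrix.det_diagonal]
  have hdet2 : M2E.det = (∏ i, dzE i) * (1 - Qm).det := by
    rw [hM2E_def, Matrix.det_mul, Matrix.det_diagonal]
  have hML := OddFam.ML hfam N M X Y hXmem hYmem
  have hprod : M1E.det * M2E.det = (∏ i, dzE i) * (∏ a, dlE a) := by
    rw [hdet1, hdet2]
    calc (∏ a, dlE a) * (1 - Pm).det * ((∏ i, dzE i) * (1 - Qm).det)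
        = ((∏ i, dzE i) * (∏ a, dlE a)) * ((1 - Pm).det * (1 - Qm).det) := by ring
      _ = (∏ i, dzE i) * (∏ a, dlE a) := by rw [hML, mul_one]
  have hdz : (∏ i, dzE i) =
      algebraMap K15 (Subalgebra.center K15 (Gr M N)) (∏ i, (z15 - c15 (zi i))) := by
    rw [map_prod]
    refine Finset.prod_congr rfl fun i _ => ?_
    apply Subtype.ext
    rw [hdzE_def]
    exact (Subalgebra.coe_algebraMap _ _).symm
  have hdl : (∏ a, dlE a) =
      algebraMap K15 (Subalgebra.center K15 (Gr M N)) (∏ a, (l15 - c15 (la a))) := by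
    rw [map_prod]
    refine Finset.prod_congr rfl fun a _ => ?_
    apply Subtype.ext
    rw [hdlE_def]
    exact (Subalgebra.coe_algebraMap _ _).symm
  rw [hprod, hdz, hdl, ← map_mul]
  exact ((Subalgebra.center K15 (Gr M N)).val.commutes _)
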